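/- arXiv:1906.05988 — 3 statements merged into one kernel-verified Lean document; each statement's English description precedes it below -/
import Mathlib

section
/- A Borel probability measure ν on ℝ^{S×Z} with ν(Δ(S×Z)) = 1 satisfies ∫ |p − p̄| dν(p) ≤ c componentwise (where |·| is the componentwise absolute value; the integral exists since the integrand is bounded on Δ(S×Z)) if and only if there exists a Borel probability measure μ̃ on ℝ^{S×Z} × ℝ^{S×Z} with μ̃(X̃) = 1, whose u-coordinate is integrable with ∫ u dμ̃ = c, and whose pushforward under the projection (p,u) ↦ p equals ν. In other words, the mean-absolute-deviation condition E[|p − p̄|] ≤ c is exactly characterized by membership of the lifted distribution in the moment-based ambiguity set. -/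
open MeasureTheory

section Defs

variable {S Z A : Type*}

/-- Observation weight `n_z(b,p) = Σ_s Σ_{s'} p_s(s',z) b_s`. -/
def obsW [Fintype S] (b : S → ℝ) (p : S → (S × Z) → ℝ) (z : Z) : ℝ :=
  ∑ s, ∑ s', p s (s', z) * b s

/-- Bayesian belief update `f(b,p,z)`. -/
noncomputable def bUpd [Fintype S] (b : S → ℝ) (p : S → (S × Z) → ℝ) (z : Z) : S → ℝ :=
  fun s' => (∑ s, p s (s', z) * b s) / obsW b p z

/-- The support set `X̃_{as}`. -/
def XasSet [Fintype S] [Fintype Z] (pbar : (S × Z) → ℝ) :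
    Set (((S × Z) → ℝ) × ((S × Z) → ℝ)) :=
  {x | (∀ i, x.1 i - pbar i ≤ x.2 i) ∧ (∀ i, pbar i - x.1 i ≤ x.2 i) ∧
       x.1 ∈ stdSimplex ℝ (S × Z)}

/-- The box uncertainty set `B_{as}`. -/
def BasSet [Fintype S] [Fintype Z] (pbar c : (S × Z) → ℝ) : Set ((S × Z) → ℝ) :=
  {p | p ∈ stdSimplex ℝ (S × Z) ∧ ∀ i, |p i - pbar i| ≤ c i}

/-- The ambiguity set `D̃_{as}`. -/
def DasSet [Fintype S] [Fintype Z] (pbar c : (S × Z) → ℝ) :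
    Set (Measure (((S × Z) → ℝ) × ((S × Z) → ℝ))) :=
  {μ | IsProbabilityMeasure μ ∧ μ (XasSet pbar) = 1 ∧
       Integrable (fun x => x.2) μ ∧ (∫ x, x.2 ∂μ) = c}

/-- The product ambiguity set `D̃_a = ⊗_s D̃_{as}`. -/
def DaSet [Fintype S] [Fintype Z] (pbar c : S → (S × Z) → ℝ) :
    Set (Measure (S → ((S × Z) → ℝ) × ((S × Z) → ℝ))) :=
  {μ | ∃ ν : S → Measure (((S × Z) → ℝ) × ((S × Z) → ℝ)),
    (∀ s, ν s ∈ DasSet (pbar s) (c s)) ∧ μ = Measure.pi ν}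

/-- The term `n_z(b,p) V(f(b,p,z))`, with the convention that it is `0` when `n_z(b,p) = 0`. -/
noncomputable def bTerm [Fintype S] (V : (S → ℝ) → ℝ) (b : S → ℝ)
    (p : S → (S × Z) → ℝ) (z : Z) : ℝ :=
  if obsW b p z = 0 then 0 else obsW b p z * V (bUpd b p z)

/-- `U_V(b,a,μ̃)`. -/
noncomputable def UVal [Fintype S] [Fintype Z] (r : A → S → ℝ) (β : ℝ)
    (V : (S → ℝ) → ℝ) (b : S → ℝ) (a : A)
    (μ : Measure (S → ((S × Z) → ℝ) × ((S × Z) → ℝ))) : ℝ :=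
  ∫ x, ((∑ s, b s * r a s) + β * ∑ z, bTerm V b (fun s => (x s).1) z) ∂μ

/-- The distributionally robust Bellman operator `L`. -/
noncomputable def Lop [Fintype S] [Fintype Z] [Fintype A]
    (pbar c : A → S → (S × Z) → ℝ) (r : A → S → ℝ) (β : ℝ)
    (V : (S → ℝ) → ℝ) (b : S → ℝ) : ℝ :=
  ⨆ a : A, sInf ((fun μ => UVal r β V b a μ) '' DaSet (pbar a) (c a))

end Defs


section Aux

open MeasureTheory

lemma stdSimplex_bound' {ι : Type*} [Fintype ι] {p : ι → ℝ} (hp : p ∈ stdSimplex ℝ ι) (i : ι) :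
    0 ≤ p i ∧ p i ≤ 1 := by
  refine ⟨hp.1 i, ?_⟩
  calc p i ≤ ∑ j, p j := Finset.single_le_sum (fun j _ => hp.1 j) (Finset.mem_univ i)
  _ = 1 := hp.2

lemma abs_sub_le_one_of_mem' {ι : Type*} [Fintype ι] {p q : ι → ℝ}
    (hp : p ∈ stdSimplex ℝ ι) (hq : q ∈ stdSimplex ℝ ι) (i : ι) : |p i - q i| ≤ 1 := by
  obtain ⟨h1, h2⟩ := stdSimplex_bound' hp i
  obtain ⟨h3, h4⟩ := stdSimplex_bound' hq i
  rw [abs_sub_le_iff]; constructor <;> linarith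

lemma measurableSet_XasSet' {S Z : Type*} [Fintype S] [Fintype Z] (pbar : (S × Z) → ℝ) :
    MeasurableSet (XasSet pbar) := by
  have h : IsClosed (XasSet pbar) := by
    have heq : XasSet pbar = (⋂ i, {x : ((S × Z) → ℝ) × ((S × Z) → ℝ) | x.1 i - pbar i ≤ x.2 i}) ∩
        ((⋂ i, {x : ((S × Z) → ℝ) × ((S × Z) → ℝ) | pbar i - x.1 i ≤ x.2 i}) ∩
          (Prod.fst ⁻¹' stdSimplex ℝ (S × Z))) := by
      ext x
      simp only [XasSet, Set.mem_setOf_eq, Set.mem_inter_iff, Set.mem_iInter, Set.mem_preimage]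
    rw [heq]
    refine (isClosed_iInter fun i => isClosed_le (by fun_prop) (by fun_prop)).inter
      ((isClosed_iInter fun i => isClosed_le (by fun_prop) (by fun_prop)).inter
        ((isClosed_stdSimplex _ _).preimage continuous_fst))
  exact h.measurableSet

end Aux

/-- A Borel probability measure `ν` on `ℝ^{S×Z}` concentrated on the simplex
satisfies the componentwise mean-absolute-deviation bound `∫ |p − p̄| dν ≤ c` if and only if
there is a lifted Borel probability measure `μ̃` on `ℝ^{S×Z} × ℝ^{S×Z}` concentrated on `X̃`,
with integrable `u`-coordinate of mean `c`, whose marginal on the `p`-coordinate is `ν`. -/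
theorem mad_iff_lifted_ambiguity_member {S Z : Type*} [Fintype S] [Nonempty S]
    [Fintype Z] [Nonempty Z]
    (pbar : (S × Z) → ℝ) (hpbar : pbar ∈ stdSimplex ℝ (S × Z))
    (c : (S × Z) → ℝ) (hc : ∀ i, 0 ≤ c i)
    (ν : Measure ((S × Z) → ℝ)) [IsProbabilityMeasure ν]
    (hν : ν (stdSimplex ℝ (S × Z)) = 1) :
    (∀ i, (∫ q, |q i - pbar i| ∂ν) ≤ c i) ↔
      ∃ μ : Measure (((S × Z) → ℝ) × ((S × Z) → ℝ)),
        IsProbabilityMeasure μ ∧ μ (XasSet pbar) = 1 ∧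
        Integrable (fun x => x.2) μ ∧ (∫ x, x.2 ∂μ) = c ∧
        μ.map Prod.fst = ν := by
    classical
  have hSmeas : MeasurableSet (stdSimplex ℝ (S × Z)) := (isClosed_stdSimplex _ _).measurableSet
  have hXmeas := measurableSet_XasSet' (S := S) (Z := Z) pbar
  have hae : ∀ᵐ q ∂ν, q ∈ stdSimplex ℝ (S × Z) := by
    rw [ae_iff]
    have : {q : (S × Z) → ℝ | ¬ q ∈ stdSimplex ℝ (S × Z)} = (stdSimplex ℝ (S × Z))ᶜ := rfl
    rw [this, measure_compl hSmeas (measure_ne_top ν _), hν, measure_univ, tsub_self]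
  -- integrability of component abs functions w.r.t. ν
  have hmeasc : ∀ i : S × Z, Measurable (fun q : (S × Z) → ℝ => |q i - pbar i|) := by
    intro i; fun_prop
  have hIntabs : ∀ i : S × Z, Integrable (fun q : (S × Z) → ℝ => |q i - pbar i|) ν := by
    intro i
    refine (integrable_const (1 : ℝ)).mono' (hmeasc i).aestronglyMeasurable ?_
    filter_upwards [hae] with q hq
    rw [Real.norm_eq_abs, abs_abs]
    exact abs_sub_le_one_of_mem' hq hpbar i
  constructor
  · intro hmad
    set m : (S × Z) → ℝ := fun i => ∫ q, |q i - pbar i| ∂ν with hm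
    set d : (S × Z) → ℝ := fun i => c i - m i with hd
    have hd0 : ∀ i, 0 ≤ d i := fun i => sub_nonneg.2 (hmad i)
    set T : ((S × Z) → ℝ) → ((S × Z) → ℝ) × ((S × Z) → ℝ) :=
      fun q => (q, fun i => |q i - pbar i| + d i) with hT
    have hTc : Continuous T := by
      refine continuous_id.prodMk (continuous_pi fun i => ?_)
      exact (((continuous_apply i).sub continuous_const).abs.add continuous_const)
    have hTm : Measurable T := hTc.measurable
    refine ⟨ν.map T, ?_, ?_, ?_, ?_, ?_⟩
    · exact Measure.isProbabilityMeasure_map hTm.aemeasurable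
    · rw [Measure.map_apply hTm hXmeas]
      have hsub : stdSimplex ℝ (S × Z) ⊆ T ⁻¹' XasSet pbar := by
        intro q hq
        refine ⟨fun i => ?_, fun i => ?_, hq⟩
        · exact (le_abs_self _).trans (le_add_of_nonneg_right (hd0 i))
        · calc pbar i - q i ≤ |pbar i - q i| := le_abs_self _
          _ = |q i - pbar i| := abs_sub_comm _ _
          _ ≤ |q i - pbar i| + d i := le_add_of_nonneg_right (hd0 i)
      refine le_antisymm (measure_mono (Set.subset_univ _) |>.trans_eq (measure_univ)) ?_
      calc (1 : ENNReal) = ν (stdSimplex ℝ (S × Z)) := hν.symm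
      _ ≤ ν (T ⁻¹' XasSet pbar) := measure_mono hsub
    · rw [integrable_map_measure (by fun_prop) hTm.aemeasurable]
      refine (integrable_const (1 + ∑ i, d i)).mono'
        (Continuous.aestronglyMeasurable (by fun_prop)) ?_
      filter_upwards [hae] with q hq
      rw [pi_norm_le_iff_of_nonneg (by
        have := Finset.sum_nonneg (fun j (_ : j ∈ Finset.univ) => hd0 j); linarith)]
      intro i
      have h1 : |q i - pbar i| ≤ 1 := abs_sub_le_one_of_mem' hq hpbar i
      have h2 : d i ≤ ∑ j, d j := Finset.single_le_sum (fun j _ => hd0 j) (Finset.mem_univ i)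
      show ‖|q i - pbar i| + d i‖ ≤ _
      rw [Real.norm_eq_abs, abs_of_nonneg (add_nonneg (abs_nonneg _) (hd0 i))]
      linarith
    · rw [integral_map hTm.aemeasurable (by fun_prop)]
      have hInt2 : ∀ i : S × Z, Integrable (fun q : (S × Z) → ℝ => |q i - pbar i| + d i) ν :=
        fun i => (hIntabs i).add (integrable_const _)
      have hIntT : Integrable (fun q : (S × Z) → ℝ => (fun i => |q i - pbar i| + d i)) ν := by
        refine (integrable_const (1 + ∑ i, d i)).mono'
          (Continuous.aestronglyMeasurable (by fun_prop)) ?_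
        filter_upwards [hae] with q hq
        rw [pi_norm_le_iff_of_nonneg (by
        have := Finset.sum_nonneg (fun j (_ : j ∈ Finset.univ) => hd0 j); linarith)]
        intro i
        have h1 : |q i - pbar i| ≤ 1 := abs_sub_le_one_of_mem' hq hpbar i
        have h2 : d i ≤ ∑ j, d j := Finset.single_le_sum (fun j _ => hd0 j) (Finset.mem_univ i)
        rw [Real.norm_eq_abs, abs_of_nonneg (add_nonneg (abs_nonneg _) (hd0 i))]
        linarith
      funext i
      have := (ContinuousLinearMap.proj (R := ℝ) (φ := fun _ : S × Z => ℝ) i).integral_comp_comm hIntT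
      simp only [ContinuousLinearMap.proj_apply] at this
      calc (∫ q, (T q).2 ∂ν) i = ∫ q, |q i - pbar i| + d i ∂ν := by rw [this]
      _ = (∫ q, |q i - pbar i| ∂ν) + ∫ _q, d i ∂ν := integral_add (hIntabs i) (integrable_const _)
      _ = m i + d i := by rw [integral_const]; simp [hm]
      _ = c i := by simp [hd]
    · rw [Measure.map_map measurable_fst hTm]
      have : (Prod.fst ∘ T) = id := rfl
      rw [this, Measure.map_id]
  · rintro ⟨μ, hprob, hX1, hIntu, hIntEq, hmap⟩
    have haeX : ∀ᵐ x ∂μ, x ∈ XasSet pbar := by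
      rw [ae_iff]
      have : {x | ¬ x ∈ XasSet pbar} = (XasSet pbar)ᶜ := rfl
      rw [this, measure_compl hXmeas (measure_ne_top μ _), hX1, measure_univ, tsub_self]
    intro i
    have hmeq : (∫ q, |q i - pbar i| ∂ν) = ∫ x, |x.1 i - pbar i| ∂μ := by
      rw [← hmap, integral_map measurable_fst.aemeasurable (Measurable.aestronglyMeasurable (by fun_prop))]
    have hIntui : Integrable (fun x : ((S × Z) → ℝ) × ((S × Z) → ℝ) => x.2 i) μ := by
      have := (ContinuousLinearMap.proj (R := ℝ) (φ := fun _ : S × Z => ℝ) i).integrable_comp hIntu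
      simpa [Function.comp] using this
    have hIntabs' : Integrable (fun x : ((S × Z) → ℝ) × ((S × Z) → ℝ) => |x.1 i - pbar i|) μ := by
      refine (integrable_const (1 : ℝ)).mono' (Measurable.aestronglyMeasurable (by fun_prop)) ?_
      filter_upwards [haeX] with x hx
      rw [Real.norm_eq_abs, abs_abs]
      exact abs_sub_le_one_of_mem' hx.2.2 hpbar i
    rw [hmeq]
    have hle : (∫ x, |x.1 i - pbar i| ∂μ) ≤ ∫ x, x.2 i ∂μ := by
      refine integral_mono_ae hIntabs' hIntui ?_
      filter_upwards [haeX] with x hx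
      rw [abs_sub_le_iff]
      exact ⟨hx.1 i, hx.2.1 i⟩
    have hci : (∫ x, x.2 i ∂μ) = c i := by
      have := (ContinuousLinearMap.proj (R := ℝ) (φ := fun _ : S × Z => ℝ) i).integral_comp_comm hIntu
      simp only [ContinuousLinearMap.proj_apply] at this
      rw [this, hIntEq]
    linarith
end

section
/- Let g : (ℝ^{S×Z})^S → ℝ be convex and continuous, and let a ∈ A. Then inf_{μ̃ ∈ D̃_a} ∫ g(p) dμ̃(p,u) = min { g(p) : p ∈ ∏_{s∈S} B_{as} }, where the minimum on the right is attained; moreover the infimum on the left is attained by the point mass at ((p*_s, c_{as}))_{s∈S} for any minimizer p* = (p*_s)_{s∈S}. That is, for convex objectives the worst-case distribution in the mean-absolute-deviation ambiguity set may be taken to be a point mass supported in the box-constrained simplex. -/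
open MeasureTheory

open MeasureTheory Set
open scoped Classical

lemma pi_dirac_eq {ι : Type*} [Fintype ι] {α : ι → Type*} [∀ i, MeasurableSpace (α i)]
    (x : ∀ i, α i) :
    Measure.pi (fun i => Measure.dirac (x i)) = Measure.dirac x := by
  refine Measure.pi_eq (μ := fun i => Measure.dirac (x i)) fun s hs => ?_
  rw [Measure.dirac_apply' _ (MeasurableSet.univ_pi hs), Set.indicator_apply]
  split_ifs with h
  · refine (Finset.prod_eq_one fun i _ => ?_).symm
    rw [Measure.dirac_apply' _ (hs i), Set.indicator_of_mem (h i (Set.mem_univ i))]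
    rfl
  · obtain ⟨i, hi⟩ : ∃ i, x i ∉ s i := by simpa [Set.mem_pi] using h
    refine (Finset.prod_eq_zero (Finset.mem_univ i) ?_).symm
    rw [Measure.dirac_apply' _ (hs i), Set.indicator_of_notMem hi]

lemma map_eval_pi {ι : Type*} [Fintype ι] {α : ι → Type*} [∀ i, MeasurableSpace (α i)]
    (ν : ∀ i, Measure (α i)) [∀ i, IsProbabilityMeasure (ν i)] (j : ι) :
    (Measure.pi ν).map (Function.eval j) = ν j := by
  classical
  ext A hA
  rw [Measure.map_apply (measurable_pi_apply j) hA, Set.eval_preimage, Measure.pi_pi]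
  refine Finset.prod_eq_single j (fun i _ hij => ?_) (by simp) |>.trans (by simp)
  simp [Function.update_of_ne hij]

lemma integral_eval_pi {ι : Type*} [Fintype ι] {α : ι → Type*} [∀ i, MeasurableSpace (α i)]
    (ν : ∀ i, Measure (α i)) [∀ i, IsProbabilityMeasure (ν i)] (j : ι)
    {E : Type*} [NormedAddCommGroup E] [NormedSpace ℝ E]
    (f : α j → E) (hf : AEStronglyMeasurable f (ν j)) :
    ∫ x, f (x j) ∂Measure.pi ν = ∫ y, f y ∂ν j := by
  rw [← map_eval_pi ν j,
    integral_map (measurable_pi_apply j).aemeasurable (by rwa [map_eval_pi ν j])]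

lemma norm_le_one_of_mem_stdSimplex {ι : Type*} [Fintype ι] {p : ι → ℝ}
    (hp : p ∈ stdSimplex ℝ ι) : ‖p‖ ≤ 1 := by
  rw [pi_norm_le_iff_of_nonneg zero_le_one]
  intro i
  rw [Real.norm_eq_abs, abs_le]
  constructor
  · linarith [hp.1 i]
  · rw [← hp.2]
    exact Finset.single_le_sum (fun j _ => hp.1 j) (Finset.mem_univ i)

set_option synthInstance.maxSize 1000 in
set_option maxHeartbeats 1000000 in
/-- For a convex continuous objective `g`, the worst case over the
mean-absolute-deviation ambiguity set `D̃_a` equals the minimum of `g` over the product of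
the box-constrained simplices `∏_s B_{as}`; the minimum is attained, and for any minimizer
`p*` the point mass at `((p*_s, c_{as}))_s` attains the infimum. -/
theorem worst_case_dist_is_point_mass {S Z A : Type*} [Fintype S] [Nonempty S]
    [Fintype Z] [Nonempty Z] [Fintype A] [Nonempty A]
    (pbar c : A → S → (S × Z) → ℝ)
    (hpbar : ∀ a s, pbar a s ∈ stdSimplex ℝ (S × Z))
    (hc : ∀ a s i, 0 ≤ c a s i)
    (g : (S → (S × Z) → ℝ) → ℝ)
    (hgcv : ConvexOn ℝ Set.univ g) (hgct : Continuous g) (a : A) :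
    (∃ pstar ∈ {p : S → (S × Z) → ℝ | ∀ s, p s ∈ BasSet (pbar a s) (c a s)},
        ∀ p ∈ {p : S → (S × Z) → ℝ | ∀ s, p s ∈ BasSet (pbar a s) (c a s)}, g pstar ≤ g p) ∧
    (∀ pstar ∈ {p : S → (S × Z) → ℝ | ∀ s, p s ∈ BasSet (pbar a s) (c a s)},
      (∀ p ∈ {p : S → (S × Z) → ℝ | ∀ s, p s ∈ BasSet (pbar a s) (c a s)}, g pstar ≤ g p) →
        Measure.dirac (fun s => (pstar s, c a s)) ∈ DaSet (pbar a) (c a) ∧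
        sInf ((fun μ => ∫ x, g (fun s => (x s).1) ∂μ) '' DaSet (pbar a) (c a)) = g pstar) := by
  classical
  set K : Set (S → (S × Z) → ℝ) :=
    {p : S → (S × Z) → ℝ | ∀ s, p s ∈ BasSet (pbar a s) (c a s)} with hK
  have hBclosed : ∀ s, IsClosed (BasSet (pbar a s) (c a s)) := by
    intro s
    have : BasSet (pbar a s) (c a s) =
        stdSimplex ℝ (S × Z) ∩ ⋂ i, {p : (S × Z) → ℝ | |p i - pbar a s i| ≤ c a s i} := by
      ext p; simp [BasSet, Set.mem_iInter]
    rw [this]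
    exact (isClosed_stdSimplex ℝ (S × Z)).inter (isClosed_iInter fun i =>
      isClosed_le (continuous_abs.comp ((continuous_apply i).sub continuous_const))
        continuous_const)
  have hBcompact : ∀ s, IsCompact (BasSet (pbar a s) (c a s)) := fun s =>
    (isCompact_stdSimplex ℝ (S × Z)).of_isClosed_subset (hBclosed s) fun p hp => hp.1
  have hKeq : K = Set.pi Set.univ (fun s => BasSet (pbar a s) (c a s)) := by
    ext p; simp [hK, Set.mem_pi]
  have hKcompact : IsCompact K := hKeq ▸ isCompact_univ_pi hBcompact
  have hpbarB : ∀ s, pbar a s ∈ BasSet (pbar a s) (c a s) := fun s =>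
    ⟨hpbar a s, fun i => by simpa using hc a s i⟩
  have hKne : (fun s => pbar a s) ∈ K := fun s => hpbarB s
  obtain ⟨pm, hpmK, hpm⟩ := hKcompact.exists_isMinOn ⟨_, hKne⟩ hgct.continuousOn
  refine ⟨⟨pm, hpmK, fun p hp => isMinOn_iff.mp hpm p hp⟩, ?_⟩
  intro pstar hpstar hmin
  have hXclosed : ∀ s : S,
      IsClosed (XasSet (pbar a s) : Set (((S × Z) → ℝ) × ((S × Z) → ℝ))) := by
    intro s
    have : (XasSet (pbar a s) : Set (((S × Z) → ℝ) × ((S × Z) → ℝ))) =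
        (⋂ i, {x : ((S × Z) → ℝ) × ((S × Z) → ℝ) | x.1 i - pbar a s i ≤ x.2 i}) ∩
        ((⋂ i, {x : ((S × Z) → ℝ) × ((S × Z) → ℝ) | pbar a s i - x.1 i ≤ x.2 i}) ∩
          (Prod.fst ⁻¹' stdSimplex ℝ (S × Z))) := by
      ext x; simp [XasSet, Set.mem_iInter, and_assoc]
    rw [this]
    refine (isClosed_iInter fun i => isClosed_le
        (((continuous_apply i).comp continuous_fst).sub continuous_const)
        ((continuous_apply i).comp continuous_snd)).inter
      ((isClosed_iInter fun i => isClosed_le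
        (continuous_const.sub ((continuous_apply i).comp continuous_fst))
        ((continuous_apply i).comp continuous_snd)).inter
        ((isClosed_stdSimplex ℝ (S × Z)).preimage continuous_fst))
  have hx0mem : ∀ s, ((pstar s, c a s) : ((S × Z) → ℝ) × ((S × Z) → ℝ)) ∈
      XasSet (pbar a s) := by
    intro s
    refine ⟨fun i => (abs_le.1 ((hpstar s).2 i)).2, fun i => ?_, (hpstar s).1⟩
    have := (abs_le.1 ((hpstar s).2 i)).1; linarith
  have hdiracDas : ∀ s, Measure.dirac ((pstar s, c a s) : ((S × Z) → ℝ) × ((S × Z) → ℝ)) ∈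
      DasSet (pbar a s) (c a s) := by
    intro s
    refine ⟨inferInstance, ?_, ?_, ?_⟩
    · rw [Measure.dirac_apply' _ (hXclosed s).measurableSet,
        Set.indicator_of_mem (hx0mem s)]
      rfl
    · have heq : (fun x : ((S × Z) → ℝ) × ((S × Z) → ℝ) => x.2)
          =ᵐ[Measure.dirac ((pstar s, c a s) : ((S × Z) → ℝ) × ((S × Z) → ℝ))]
          fun _ => c a s := by
        rw [Filter.EventuallyEq, ae_dirac_eq]
        exact Filter.eventually_pure.2 rfl
      exact (integrable_const _).congr heq.symm
    · rw [integral_dirac]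
  have hdiracmem : Measure.dirac
      (fun s => ((pstar s, c a s) : ((S × Z) → ℝ) × ((S × Z) → ℝ))) ∈
      DaSet (pbar a) (c a) :=
    ⟨fun s => Measure.dirac (pstar s, c a s), hdiracDas, (pi_dirac_eq _).symm⟩
  refine ⟨hdiracmem, ?_⟩
  refine IsLeast.csInf_eq ⟨⟨_, hdiracmem, ?_⟩, ?_⟩
  · show (∫ x, g (fun s => (x s).1)
      ∂Measure.dirac (fun s => ((pstar s, c a s) : ((S × Z) → ℝ) × ((S × Z) → ℝ)))) = g pstar
    rw [integral_dirac]
  · rintro y ⟨μ, ⟨ν, hν, rfl⟩, rfl⟩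
    haveI hprob : ∀ s, IsProbabilityMeasure (ν s) := fun s => (hν s).1
    have haes : ∀ s, ∀ᵐ y ∂ν s, y ∈ XasSet (pbar a s) := by
      intro s
      rw [ae_iff]
      have h0 : {y : ((S × Z) → ℝ) × ((S × Z) → ℝ) | ¬ y ∈ XasSet (pbar a s)} =
          (XasSet (pbar a s))ᶜ := rfl
      rw [h0, measure_compl (hXclosed s).measurableSet (measure_ne_top _ _), (hν s).2.1,
        measure_univ]
      simp
    have hp_int : ∀ s, Integrable (fun y : ((S × Z) → ℝ) × ((S × Z) → ℝ) => y.1) (ν s) := by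
      intro s
      refine Integrable.mono' (integrable_const (1 : ℝ)) continuous_fst.aestronglyMeasurable ?_
      exact (haes s).mono fun y hy => norm_le_one_of_mem_stdSimplex hy.2.2
    have hu_int : ∀ s, Integrable
        (fun y : ((S × Z) → ℝ) × ((S × Z) → ℝ) => y.2) (ν s) := fun s => (hν s).2.2.1
    set q : S → (S × Z) → ℝ := fun s => ∫ y, y.1 ∂ν s with hq
    have hq_coord : ∀ s i, (∫ y, y.1 i ∂ν s) = q s i := fun s i =>
      (ContinuousLinearMap.proj (R := ℝ) (φ := fun _ : S × Z => ℝ) i).integral_comp_comm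
        (hp_int s)
    have hp_i_int : ∀ s i, Integrable
        (fun y : ((S × Z) → ℝ) × ((S × Z) → ℝ) => y.1 i) (ν s) := fun s i =>
      (ContinuousLinearMap.proj (R := ℝ) (φ := fun _ : S × Z => ℝ) i).integrable_comp
        (hp_int s)
    have hu_i_int : ∀ s i, Integrable
        (fun y : ((S × Z) → ℝ) × ((S × Z) → ℝ) => y.2 i) (ν s) := fun s i =>
      (ContinuousLinearMap.proj (R := ℝ) (φ := fun _ : S × Z => ℝ) i).integrable_comp
        (hu_int s)
    have hu_i_eq : ∀ s i, (∫ y, y.2 i ∂ν s) = c a s i := by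
      intro s i
      have h1 := (ContinuousLinearMap.proj (R := ℝ) (φ := fun _ : S × Z => ℝ)
        i).integral_comp_comm (hu_int s)
      simpa [(hν s).2.2.2] using h1
    have hqK : ∀ s, q s ∈ BasSet (pbar a s) (c a s) := by
      intro s
      refine ⟨⟨fun i => ?_, ?_⟩, fun i => ?_⟩
      · rw [← hq_coord s i]
        exact integral_nonneg_of_ae ((haes s).mono fun y hy => hy.2.2.1 i)
      · have hsum : ∑ i, q s i = ∫ y, ∑ i, y.1 i ∂ν s := by
          rw [integral_finset_sum Finset.univ (fun i _ => hp_i_int s i)]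
          exact Finset.sum_congr rfl fun i _ => (hq_coord s i).symm
        rw [hsum, integral_congr_ae ((haes s).mono fun y hy => hy.2.2.2)]
        simp
      · have hsub : q s i - pbar a s i = ∫ y, (y.1 i - pbar a s i) ∂ν s := by
          rw [integral_sub (hp_i_int s i) (integrable_const _), hq_coord s i, integral_const]
          simp
        rw [hsub]
        calc |∫ y, (y.1 i - pbar a s i) ∂ν s| ≤ ∫ y, |y.1 i - pbar a s i| ∂ν s := by
              simpa [Real.norm_eq_abs] using norm_integral_le_integral_norm
                (μ := ν s) (fun y : ((S × Z) → ℝ) × ((S × Z) → ℝ) => y.1 i - pbar a s i)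
          _ ≤ ∫ y, y.2 i ∂ν s := by
              refine integral_mono_ae ((hp_i_int s i).sub (integrable_const _)).abs
                (hu_i_int s i) ?_
              exact (haes s).mono fun y hy => abs_le.2 ⟨by linarith [hy.2.1 i], hy.1 i⟩
          _ = c a s i := hu_i_eq s i
    have hfcont : Continuous
        (fun x : S → ((S × Z) → ℝ) × ((S × Z) → ℝ) => fun s => (x s).1) :=
      continuous_pi fun s => continuous_fst.comp (continuous_apply s)
    have haeT : ∀ᵐ x ∂Measure.pi ν, ∀ s, x s ∈ XasSet (pbar a s) := by
      set T := Set.pi Set.univ (fun s => XasSet (pbar a s)) with hT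
      have hTmeas : MeasurableSet T := MeasurableSet.univ_pi fun s => (hXclosed s).measurableSet
      have hT1 : Measure.pi ν T = 1 := by
        rw [hT, Measure.pi_pi]
        simp [(hν _).2.1]
      have hae1 : ∀ᵐ x ∂Measure.pi ν, x ∈ T := by
        rw [ae_iff]
        have h0 : {x : S → ((S × Z) → ℝ) × ((S × Z) → ℝ) | ¬ x ∈ T} = Tᶜ := rfl
        rw [h0, measure_compl hTmeas (measure_ne_top _ _), hT1, measure_univ]
        simp
      exact hae1.mono fun x hx s => hx s (Set.mem_univ s)
    have hfint : Integrable
        (fun x : S → ((S × Z) → ℝ) × ((S × Z) → ℝ) => fun s => (x s).1) (Measure.pi ν) := by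
      refine Integrable.mono' (integrable_const (1 : ℝ)) hfcont.aestronglyMeasurable ?_
      refine haeT.mono fun x hx => ?_
      rw [pi_norm_le_iff_of_nonneg zero_le_one]
      exact fun s => norm_le_one_of_mem_stdSimplex (hx s).2.2
    obtain ⟨C, hC⟩ := (isCompact_univ_pi fun _ : S =>
      isCompact_stdSimplex ℝ (S × Z)).exists_bound_of_continuousOn hgct.continuousOn
    have hgfint : Integrable (fun x : S → ((S × Z) → ℝ) × ((S × Z) → ℝ) =>
        g (fun s => (x s).1)) (Measure.pi ν) := by
      refine Integrable.mono' (integrable_const C)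
        (hgct.comp hfcont).aestronglyMeasurable ?_
      exact haeT.mono fun x hx => hC _ fun s _ => (hx s).2.2
    have hmean : (∫ x, (fun s => (x s).1) ∂Measure.pi ν) = q := by
      funext s
      have h1 : (∫ x : S → ((S × Z) → ℝ) × ((S × Z) → ℝ), (fun s => (x s).1) ∂Measure.pi ν) s
          = ∫ x : S → ((S × Z) → ℝ) × ((S × Z) → ℝ), (x s).1 ∂Measure.pi ν :=
        ((ContinuousLinearMap.proj (R := ℝ) (φ := fun _ : S => (S × Z) → ℝ)
          s).integral_comp_comm hfint).symm
      rw [h1]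
      exact integral_eval_pi ν s
        (fun y : ((S × Z) → ℝ) × ((S × Z) → ℝ) => y.1) continuous_fst.aestronglyMeasurable
    have hjensen := hgcv.map_integral_le (μ := Measure.pi ν) hgct.continuousOn isClosed_univ
      (Filter.Eventually.of_forall fun _ => Set.mem_univ _) hfint hgfint
    rw [hmean] at hjensen
    exact le_trans (hmin q hqK) hjensen
end

section
/- Fix a ∈ A, b ∈ Δ(S), and vectors α_z ∈ ℝ^S for each z ∈ Z. Consider the linear program: maximize Σ_{s∈S} [ ⟨c_{as}, ρ_s⟩ + b_s r_{as} − ⟨p̄_{as}, κ¹_s⟩ + ⟨p̄_{as}, κ²_s⟩ + σ_s ] over variables κ¹_s, κ²_s ∈ ℝ^{S×Z} with κ¹_s ≥ 0, κ²_s ≥ 0, σ_s ∈ ℝ, and ρ_s ∈ ℝ^{S×Z} for each s ∈ S, subject to: for every s ∈ S and every (s',z) ∈ S×Z, β b_s α_z(s') + κ¹_s(s',z) − κ²_s(s',z) − σ_s ≥ 0, and κ¹_s + κ²_s + ρ_s = 0. Then the optimal value of this linear program is attained and equals Σ_{s∈S} b_s Ξ_{as}, where Ξ_{as} = r_{as}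 + min { β Σ_{(s',z)∈S×Z} α_z(s') p(s',z) : p ∈ B_{as} }. -/
open MeasureTheory

/-- Weak duality for the single-state box-simplex LP. -/
lemma lp_weak_duality {I : Type*} [Fintype I] (pbar c w q κ1 κ2 : I → ℝ) (σ : ℝ)
    (hq0 : ∀ i, 0 ≤ q i) (hqs : ∑ i, q i = 1)
    (hql : ∀ i, pbar i - c i ≤ q i) (hqu : ∀ i, q i ≤ pbar i + c i)
    (hκ1 : ∀ i, 0 ≤ κ1 i) (hκ2 : ∀ i, 0 ≤ κ2 i)
    (hfeas : ∀ i, 0 ≤ w i + κ1 i - κ2 i - σ) :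
    σ - (∑ i, (pbar i + c i) * κ1 i) + (∑ i, (pbar i - c i) * κ2 i) ≤ ∑ i, w i * q i := by
  have h1 : σ - (∑ i, (pbar i + c i) * κ1 i) + (∑ i, (pbar i - c i) * κ2 i)
      ≤ ∑ i, q i * (σ - κ1 i + κ2 i) := by
    have : ∑ i, q i * (σ - κ1 i + κ2 i)
        = σ - (∑ i, q i * κ1 i) + (∑ i, q i * κ2 i) := by
      simp [mul_sub, mul_add, Finset.sum_add_distrib, Finset.sum_sub_distrib,
        ← Finset.sum_mul, hqs]
    rw [this]
    have hA : ∑ i, q i * κ1 i ≤ ∑ i, (pbar i + c i) * κ1 i :=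
      Finset.sum_le_sum fun i _ => mul_le_mul_of_nonneg_right (hqu i) (hκ1 i)
    have hB : ∑ i, (pbar i - c i) * κ2 i ≤ ∑ i, q i * κ2 i :=
      Finset.sum_le_sum fun i _ => mul_le_mul_of_nonneg_right (hql i) (hκ2 i)
    linarith
  refine h1.trans (Finset.sum_le_sum fun i _ => ?_)
  have := hfeas i
  nlinarith [hq0 i]


/-- Strong duality: explicit primal minimizer and dual optimal solution. -/
lemma lp_strong_duality {I : Type*} [Fintype I] [Nonempty I] (pbar c w : I → ℝ)
    (hp0 : ∀ i, 0 ≤ pbar i) (hps : ∑ i, pbar i = 1) (hc : ∀ i, 0 ≤ c i) :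
    ∃ (p κ1 κ2 : I → ℝ) (σ : ℝ),
      (∀ i, 0 ≤ p i) ∧ (∑ i, p i = 1) ∧ (∀ i, |p i - pbar i| ≤ c i) ∧
      (∀ i, 0 ≤ κ1 i) ∧ (∀ i, 0 ≤ κ2 i) ∧
      (∀ i, 0 ≤ w i + κ1 i - κ2 i - σ) ∧
      σ - (∑ i, (pbar i + c i) * κ1 i) + (∑ i, (pbar i - c i) * κ2 i) = ∑ i, w i * p i := by
  classical
  set l : I → ℝ := fun i => max (pbar i - c i) 0 with hl
  set u : I → ℝ := fun i => pbar i + c i with hu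
  have hl0 : ∀ i, 0 ≤ l i := fun i => le_max_right _ _
  have hlpbar : ∀ i, l i ≤ pbar i := fun i => max_le (by linarith [hc i]) (hp0 i)
  have hlu : ∀ i, l i ≤ u i := fun i => (hlpbar i).trans (by simp [hu]; linarith [hc i])
  have hllb : ∀ i, pbar i - c i ≤ l i := fun i => le_max_left _ _
  -- the threshold
  have hWne : (Finset.univ.image w).Nonempty := by
    simpa using Finset.univ_nonempty.image w
  set W : Finset ℝ := Finset.univ.image w with hW
  set T : Finset ℝ := W.filter (fun t => 1 ≤ ∑ i, if w i ≤ t then u i else l i) with hT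
  have hsumu : 1 ≤ ∑ i, u i := by
    calc (1:ℝ) = ∑ i, pbar i := hps.symm
    _ ≤ ∑ i, u i := Finset.sum_le_sum fun i _ => by simp [hu]; linarith [hc i]
  have hTne : T.Nonempty := by
    refine ⟨W.max' hWne, Finset.mem_filter.2 ⟨W.max'_mem hWne, ?_⟩⟩
    have : ∀ i, w i ≤ W.max' hWne := fun i =>
      W.le_max' _ (Finset.mem_image_of_mem w (Finset.mem_univ i))
    calc (1:ℝ) ≤ ∑ i, u i := hsumu
    _ = ∑ i, if w i ≤ W.max' hWne then u i else l i :=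
      (Finset.sum_congr rfl fun i _ => by rw [if_pos (this i)]).symm
  set t : ℝ := T.min' hTne with ht
  have htT : t ∈ T := T.min'_mem hTne
  set Av : ℝ := ∑ i, if w i < t then u i else l i with hAv
  set Bv : ℝ := ∑ i, if w i ≤ t then u i else l i with hBv
  have hB1 : 1 ≤ Bv := (Finset.mem_filter.1 htT).2
  have hA1 : Av ≤ 1 := by
    by_cases hex : ∃ i, w i < t
    · set W' : Finset ℝ := W.filter (fun x => x < t) with hW'
      have hW'ne : W'.Nonempty := by
        obtain ⟨i, hi⟩ := hex
        exact ⟨w i, Finset.mem_filter.2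
          ⟨Finset.mem_image_of_mem w (Finset.mem_univ i), hi⟩⟩
      set t' : ℝ := W'.max' hW'ne with ht'
      have ht'W' : t' ∈ W' := W'.max'_mem hW'ne
      have ht'lt : t' < t := (Finset.mem_filter.1 ht'W').2
      have hcongr : Av = ∑ i, if w i ≤ t' then u i else l i := by
        refine Finset.sum_congr rfl fun i _ => ?_
        by_cases h : w i < t
        · rw [if_pos h, if_pos (W'.le_max' _ (Finset.mem_filter.2
            ⟨Finset.mem_image_of_mem w (Finset.mem_univ i), h⟩))]
        · rw [if_neg h, if_neg (fun hle => h (lt_of_le_of_lt hle ht'lt))]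
      have ht'notT : t' ∉ T := fun hmem => absurd (T.min'_le _ hmem) (by linarith)
      have : ¬ (1 ≤ ∑ i, if w i ≤ t' then u i else l i) := fun h1 =>
        ht'notT (Finset.mem_filter.2 ⟨(Finset.mem_filter.1 ht'W').1, h1⟩)
      rw [hcongr]; linarith
    · push_neg at hex
      have : Av = ∑ i, l i :=
        Finset.sum_congr rfl fun i _ => if_neg (not_lt.2 (hex i))
      rw [this]
      calc ∑ i, l i ≤ ∑ i, pbar i := Finset.sum_le_sum fun i _ => hlpbar i
      _ = 1 := hps
  have hD : Bv - Av = ∑ i, if w i = t then u i - l i else 0 := by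
    rw [hBv, hAv, ← Finset.sum_sub_distrib]
    refine Finset.sum_congr rfl fun i _ => ?_
    rcases lt_trichotomy (w i) t with h | h | h
    · rw [if_pos h.le, if_pos h, if_neg h.ne, sub_self]
    · rw [if_pos h.le, if_neg (by simp [h]), if_pos h]
    · rw [if_neg (not_le.2 h), if_neg (not_lt.2 h.le), if_neg h.ne', sub_self]
  have hDpos : 0 ≤ Bv - Av := by
    rw [hD]
    exact Finset.sum_nonneg fun i _ => by
      by_cases h : w i = t <;> simp [h, sub_nonneg.2 (hlu i)]
  set θ : ℝ := if Bv - Av = 0 then 0 else (1 - Av) / (Bv - Av) with hθ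
  have hθ0 : 0 ≤ θ := by
    rw [hθ]; split
    · exact le_refl 0
    · exact div_nonneg (by linarith) hDpos
  have hθ1 : θ ≤ 1 := by
    rw [hθ]; split
    · exact zero_le_one
    · rw [div_le_one (lt_of_le_of_ne hDpos (Ne.symm (by assumption)))]
      linarith
  have hkey : Av + θ * (Bv - Av) = 1 := by
    rw [hθ]; split
    · rename_i h0; rw [h0]; linarith
    · field_simp
      ring
  set p : I → ℝ := fun i =>
    if w i < t then u i else if t < w i then l i else l i + θ * (u i - l i) with hp
  have hlp : ∀ i, l i ≤ p i := by
    intro i; rw [hp]; dsimp only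
    split
    · exact hlu i
    · split
      · exact le_refl _
      · nlinarith [hlu i]
  have hpu : ∀ i, p i ≤ u i := by
    intro i; rw [hp]; dsimp only
    split
    · exact le_refl _
    · split
      · exact hlu i
      · nlinarith [hlu i]
  have hpsum : ∑ i, p i = 1 := by
    have hsplit : ∀ i, p i = (if w i < t then u i else l i)
        + θ * (if w i = t then u i - l i else 0) := by
      intro i; rw [hp]; dsimp only
      rcases lt_trichotomy (w i) t with h | h | h
      · rw [if_pos h, if_pos h, if_neg h.ne, mul_zero, add_zero]
      · rw [if_neg (by simp [h]), if_neg (by simp [h]), if_neg (by simp [h]),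
          if_pos h]
      · rw [if_neg (not_lt.2 h.le), if_neg (not_lt.2 h.le), if_pos h,
          if_neg h.ne', mul_zero, add_zero]
    calc ∑ i, p i = Av + θ * (Bv - Av) := by
          rw [hD, hAv, Finset.mul_sum, ← Finset.sum_add_distrib]
          exact Finset.sum_congr rfl fun i _ => hsplit i
    _ = 1 := hkey
  set κ1 : I → ℝ := fun i => max (t - w i) 0 with hκ1
  set κ2 : I → ℝ := fun i => if t < w i ∧ 0 ≤ pbar i - c i then w i - t else 0 with hκ2
  refine ⟨p, κ1, κ2, t, fun i => (hl0 i).trans (hlp i), hpsum, ?_, ?_, ?_, ?_, ?_⟩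
  · intro i
    rw [abs_le]
    constructor
    · have := (hllb i).trans (hlp i); linarith
    · have := hpu i; rw [hu] at this; dsimp only at this; linarith
  · intro i; exact le_max_right _ _
  · intro i; rw [hκ2]; dsimp only; split
    · rename_i h; linarith [h.1]
    · exact le_refl 0
  · intro i
    rw [hκ1, hκ2]; dsimp only
    rcases le_or_gt t (w i) with h | h
    · rw [max_eq_right (by linarith)]
      split
      · linarith
      · linarith
    · rw [max_eq_left (by linarith), if_neg (fun hh => absurd hh.1 (not_lt.2 h.le))]
      linarith
  · have hzero : ∀ i, t * p i - (pbar i + c i) * κ1 i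
        + (pbar i - c i) * κ2 i - w i * p i = 0 := by
      intro i
      rw [hp, hκ1, hκ2]; dsimp only
      rcases lt_trichotomy (w i) t with h | h | h
      · rw [if_pos h, max_eq_left (by linarith),
          if_neg (fun hh => absurd hh.1 (not_lt.2 h.le))]
        rw [hu]; ring
      · rw [if_neg (by simp [h]), if_neg (by simp [h]),
          max_eq_right (by linarith), if_neg (by simp [h])]
        rw [h]; ring
      · rw [if_neg (not_lt.2 h.le), if_pos h, max_eq_right (by linarith)]
        by_cases h2 : 0 ≤ pbar i - c i
        · rw [if_pos ⟨h, h2⟩, hl]; dsimp only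
          rw [max_eq_left h2]; ring
        · rw [if_neg (fun hh => h2 hh.2), hl]; dsimp only
          rw [max_eq_right (by linarith [not_le.1 h2])]; ring
    have hsumz : ∑ i, (t * p i - (pbar i + c i) * κ1 i
        + (pbar i - c i) * κ2 i - w i * p i) = 0 := by
      rw [Finset.sum_eq_zero fun i _ => hzero i]
    have hexpand : ∑ i, (t * p i - (pbar i + c i) * κ1 i
        + (pbar i - c i) * κ2 i - w i * p i)
        = t - (∑ i, (pbar i + c i) * κ1 i) + (∑ i, (pbar i - c i) * κ2 i)
          - ∑ i, w i * p i := by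
      rw [Finset.sum_sub_distrib, Finset.sum_add_distrib, Finset.sum_sub_distrib,
        ← Finset.mul_sum, hpsum, mul_one]
    rw [hexpand] at hsumz
    linarith

/-- The dual linear program of the inner minimization attains its optimal value,
which equals `Σ_s b_s Ξ_{as}` with `Ξ_{as} = r_{as} + min { β Σ_{(s',z)} α_z(s') p(s',z) : p ∈ B_{as} }`. -/
theorem lp_dual_value {S Z A : Type*} [Fintype S] [Nonempty S]
    [Fintype Z] [Nonempty Z] [Fintype A] [Nonempty A]
    (pbar c : A → S → (S × Z) → ℝ)
    (hpbar : ∀ a s, pbar a s ∈ stdSimplex ℝ (S × Z))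
    (hc : ∀ a s i, 0 ≤ c a s i)
    (r : A → S → ℝ) (β : ℝ) (hβ0 : 0 < β) (hβ1 : β < 1)
    (a : A) (b : S → ℝ) (hb : b ∈ stdSimplex ℝ S) (α : Z → S → ℝ) :
    IsGreatest
      {v : ℝ | ∃ κ1 κ2 ρ : S → (S × Z) → ℝ, ∃ σ : S → ℝ,
        (∀ s i, 0 ≤ κ1 s i) ∧ (∀ s i, 0 ≤ κ2 s i) ∧
        (∀ (s : S) (i : S × Z), 0 ≤ β * b s * α i.2 i.1 + κ1 s i - κ2 s i - σ s) ∧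
        (∀ s, κ1 s + κ2 s + ρ s = 0) ∧
        v = ∑ s, ((∑ i, c a s i * ρ s i) + b s * r a s
              - (∑ i, pbar a s i * κ1 s i) + (∑ i, pbar a s i * κ2 s i) + σ s)}
      (∑ s, b s * (r a s +
        sInf ((fun p => β * ∑ i : S × Z, α i.2 i.1 * p i) '' BasSet (pbar a s) (c a s)))) := by
  
  classical
  -- apply strong duality at every state
  have H : ∀ s : S, ∃ (p κ1 κ2 : (S × Z) → ℝ) (σ : ℝ),
      (∀ i, 0 ≤ p i) ∧ (∑ i, p i = 1) ∧ (∀ i, |p i - pbar a s i| ≤ c a s i) ∧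
      (∀ i, 0 ≤ κ1 i) ∧ (∀ i, 0 ≤ κ2 i) ∧
      (∀ i, 0 ≤ (β * b s * α i.2 i.1) + κ1 i - κ2 i - σ) ∧
      σ - (∑ i, (pbar a s i + c a s i) * κ1 i) + (∑ i, (pbar a s i - c a s i) * κ2 i)
        = ∑ i, (β * b s * α i.2 i.1) * p i :=
    fun s => lp_strong_duality (pbar a s) (c a s) (fun i => β * b s * α i.2 i.1)
      (fun i => (hpbar a s).1 i) (hpbar a s).2 (hc a s)
  choose P K1 K2 sg hP0 hPsum hPbox hK10 hK20 hfeas hval using H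
  set m : S → ℝ := fun s => β * ∑ i : S × Z, α i.2 i.1 * P s i with hm
  have hwP : ∀ s, ∑ i, (β * b s * α i.2 i.1) * P s i = b s * m s := by
    intro s
    rw [hm]; dsimp only
    rw [Finset.mul_sum, Finset.mul_sum]
    exact Finset.sum_congr rfl fun i _ => by ring
  have hPmem : ∀ s, P s ∈ BasSet (pbar a s) (c a s) :=
    fun s => ⟨⟨hP0 s, hPsum s⟩, hPbox s⟩
  -- weak duality against any q in BasSet
  have hweak : ∀ (s : S) (κ1 κ2 : (S × Z) → ℝ) (σ : ℝ), (∀ i, 0 ≤ κ1 i) →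
      (∀ i, 0 ≤ κ2 i) → (∀ i, 0 ≤ (β * b s * α i.2 i.1) + κ1 i - κ2 i - σ) →
      ∀ q ∈ BasSet (pbar a s) (c a s),
      σ - (∑ i, (pbar a s i + c a s i) * κ1 i) + (∑ i, (pbar a s i - c a s i) * κ2 i)
        ≤ ∑ i, (β * b s * α i.2 i.1) * q i := by
    intro s κ1 κ2 σ h1 h2 h3 q hq
    obtain ⟨⟨hq0, hqs⟩, hqbox⟩ := hq
    exact lp_weak_duality (pbar a s) (c a s) _ q κ1 κ2 σ hq0 hqs
      (fun i => by have := (abs_le.1 (hqbox i)).1; linarith)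
      (fun i => by have := (abs_le.1 (hqbox i)).2; linarith) h1 h2 h3
  -- the infimum equals m s (when weighted by b s)
  have hsInf : ∀ s, b s * sInf ((fun p => β * ∑ i : S × Z, α i.2 i.1 * p i)
      '' BasSet (pbar a s) (c a s)) = b s * m s := by
    intro s
    by_cases hbs : b s = 0
    · rw [hbs, zero_mul, zero_mul]
    · have hbpos : 0 < b s := lt_of_le_of_ne (hb.1 s) (Ne.symm hbs)
      congr 1
      refine IsLeast.csInf_eq ⟨⟨P s, hPmem s, rfl⟩, ?_⟩
      rintro v ⟨q, hq, rfl⟩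
      have h := hweak s (K1 s) (K2 s) (sg s) (hK10 s) (hK20 s) (hfeas s) q hq
      rw [hval s, hwP s] at h
      have hq' : ∑ i, (β * b s * α i.2 i.1) * q i
          = b s * (β * ∑ i : S × Z, α i.2 i.1 * q i) := by
        rw [Finset.mul_sum, Finset.mul_sum]
        exact Finset.sum_congr rfl fun i _ => by ring
      rw [hq'] at h
      exact le_of_mul_le_mul_left h hbpos
  -- rewriting the dual objective
  have hobj : ∀ (s : S) (κ1 κ2 : (S × Z) → ℝ) (σ : ℝ),
      (∑ i, c a s i * (-(κ1 i + κ2 i))) + b s * r a s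
        - (∑ i, pbar a s i * κ1 i) + (∑ i, pbar a s i * κ2 i) + σ
      = b s * r a s + (σ - (∑ i, (pbar a s i + c a s i) * κ1 i)
          + (∑ i, (pbar a s i - c a s i) * κ2 i)) := by
    intro s κ1 κ2 σ
    have e1 : ∑ i, (pbar a s i + c a s i) * κ1 i
        = (∑ i, pbar a s i * κ1 i) + ∑ i, c a s i * κ1 i := by
      rw [← Finset.sum_add_distrib]
      exact Finset.sum_congr rfl fun i _ => by ring
    have e2 : ∑ i, (pbar a s i - c a s i) * κ2 i
        = (∑ i, pbar a s i * κ2 i) - ∑ i, c a s i * κ2 i := by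
      rw [← Finset.sum_sub_distrib]
      exact Finset.sum_congr rfl fun i _ => by ring
    have e3 : ∑ i, c a s i * (-(κ1 i + κ2 i))
        = -(∑ i, c a s i * κ1 i) - ∑ i, c a s i * κ2 i := by
      rw [Finset.sum_congr rfl (fun (i : S × Z) _ =>
        (by ring : c a s i * (-(κ1 i + κ2 i)) = -(c a s i * κ1 i) - c a s i * κ2 i)),
        Finset.sum_sub_distrib, Finset.sum_neg_distrib]
    linarith
  constructor
  · -- the optimum is attained
    refine ⟨K1, K2, fun s => -(K1 s + K2 s), sg, hK10, hK20, hfeas,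
      fun s => by ext i; simp only [Pi.add_apply, Pi.neg_apply, Pi.zero_apply]; ring, ?_⟩
    refine Finset.sum_congr rfl fun s _ => ?_
    have hρ : ∀ i : S × Z, (fun s => -(K1 s + K2 s)) s i = -(K1 s i + K2 s i) :=
      fun i => rfl
    calc b s * (r a s + sInf ((fun p => β * ∑ i : S × Z, α i.2 i.1 * p i)
          '' BasSet (pbar a s) (c a s)))
        = b s * r a s + b s * sInf ((fun p => β * ∑ i : S × Z, α i.2 i.1 * p i)
          '' BasSet (pbar a s) (c a s)) := by ring
      _ = b s * r a s + b s * m s := by rw [hsInf s]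
      _ = b s * r a s + (sg s - (∑ i, (pbar a s i + c a s i) * K1 s i)
          + (∑ i, (pbar a s i - c a s i) * K2 s i)) := by rw [hval s, hwP s]
      _ = (∑ i, c a s i * (-(K1 s i + K2 s i))) + b s * r a s
          - (∑ i, pbar a s i * K1 s i) + (∑ i, pbar a s i * K2 s i) + sg s :=
        (hobj s (K1 s) (K2 s) (sg s)).symm
      _ = (∑ i, c a s i * (fun s => -(K1 s + K2 s)) s i) + b s * r a s
          - (∑ i, pbar a s i * K1 s i) + (∑ i, pbar a s i * K2 s i) + sg s := rfl
  · -- weak duality: any feasible value is at most the optimum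
    rintro v ⟨κ1, κ2, ρ, σ, h1, h2, h3, h4, rfl⟩
    have hρ : ∀ s i, ρ s i = -(κ1 s i + κ2 s i) := by
      intro s i
      have := congrFun (h4 s) i
      simp only [Pi.add_apply, Pi.zero_apply] at this
      linarith
    refine Finset.sum_le_sum fun s _ => ?_
    have hrw : (∑ i, c a s i * ρ s i) + b s * r a s
          - (∑ i, pbar a s i * κ1 s i) + (∑ i, pbar a s i * κ2 s i) + σ s
        = b s * r a s + (σ s - (∑ i, (pbar a s i + c a s i) * κ1 s i)
          + (∑ i, (pbar a s i - c a s i) * κ2 s i)) := by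
      rw [Finset.sum_congr rfl fun (i : S × Z) _ => by rw [hρ s i]]
      exact hobj s (κ1 s) (κ2 s) (σ s)
    rw [hrw]
    have hle := hweak s (κ1 s) (κ2 s) (σ s) (h1 s) (h2 s) (h3 s) (P s) (hPmem s)
    rw [hwP s] at hle
    calc b s * r a s + (σ s - (∑ i, (pbar a s i + c a s i) * κ1 s i)
          + (∑ i, (pbar a s i - c a s i) * κ2 s i))
        ≤ b s * r a s + b s * m s := by linarith
      _ = b s * r a s + b s * sInf ((fun p => β * ∑ i : S × Z, α i.2 i.1 * p i)
          '' BasSet (pbar a s) (c a s)) := by rw [hsInf s]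
      _ = b s * (r a s + sInf ((fun p => β * ∑ i : S × Z, α i.2 i.1 * p i)
          '' BasSet (pbar a s) (c a s))) := by ring
end
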